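/- arXiv:2110.14394 — 3 statements merged into one kernel-verified Lean document; each statement's English description precedes it below -/
import Mathlib

section
/- Let G be a graph, and suppose V(G) is partitioned into sets X₁, …, X_k such that α(G[Xᵢ]) ≤ 2 for all i, and such that for each i, every vertex of X_{i+1} has a neighbor in every non-edge of G[Xᵢ] and every vertex of Xᵢ has a neighbor in every non-edge of G[X_{i+1}]. Then every stable set S of G satisfies |S ∩ (Xᵢ ∪ X_{i+1})| ≤ 2 for each i, and hence |S| ≤ k + 1. -/
lemma arith_sum (a : ℕ → ℕ) (h1 : ∀ n, a n ≤ 2) (h2 : ∀ n, a n + a (n+1) ≤ 2) :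
    ∀ k, ∑ n ∈ Finset.range k, a n ≤ k + 1 := by
  intro k
  induction k using Nat.twoStepInduction with
  | zero => simp
  | one => simpa using (h1 0).trans (by omega)
  | more m ih _ =>
    rw [Finset.sum_range_succ, Finset.sum_range_succ]
    have := h2 m
    omega

def SimpleGraph.IsStableSet {V : Type*} (G : SimpleGraph V) (s : Set V) : Prop :=
  s.Pairwise fun u v => ¬ G.Adj u v

theorem stmt_10 {V : Type*} [Fintype V] (G : SimpleGraph V) (k : ℕ) (hk : 1 ≤ k)
    (X : Fin k → Set V)
    (hdisj : Pairwise fun i j => Disjoint (X i) (X j))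
    (hcover : (⋃ i, X i) = Set.univ)
    (halpha : ∀ i : Fin k, ∀ S : Set V, S ⊆ X i → G.IsStableSet S → S.ncard ≤ 2)
    (hfwd : ∀ i j : Fin k, (j : ℕ) = (i : ℕ) + 1 →
      ∀ v ∈ X j, ∀ x ∈ X i, ∀ y ∈ X i, x ≠ y → ¬ G.Adj x y → G.Adj v x ∨ G.Adj v y)
    (hbwd : ∀ i j : Fin k, (j : ℕ) = (i : ℕ) + 1 →
      ∀ v ∈ X i, ∀ x ∈ X j, ∀ y ∈ X j, x ≠ y → ¬ G.Adj x y → G.Adj v x ∨ G.Adj v y)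
    (S : Set V) (hS : G.IsStableSet S) :
    (∀ i j : Fin k, (j : ℕ) = (i : ℕ) + 1 → (S ∩ (X i ∪ X j)).ncard ≤ 2) ∧
      S.ncard ≤ k + 1 := by
  classical
  have hSsub : ∀ i : Fin k, G.IsStableSet (S ∩ X i) := fun i =>
    hS.mono Set.inter_subset_left
  have ha : ∀ i : Fin k, (S ∩ X i).ncard ≤ 2 := fun i =>
    halpha i _ Set.inter_subset_right (hSsub i)
  -- Part 1
  have part1 : ∀ i j : Fin k, (j : ℕ) = (i : ℕ) + 1 → (S ∩ (X i ∪ X j)).ncard ≤ 2 := by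
    intro i j hij
    have hne : i ≠ j := by intro h; subst h; omega
    have hd : Disjoint (S ∩ X i) (S ∩ X j) :=
      (hdisj hne).mono Set.inter_subset_right Set.inter_subset_right
    have hunion : S ∩ (X i ∪ X j) = (S ∩ X i) ∪ (S ∩ X j) := Set.inter_union_distrib_left ..
    rw [hunion, Set.ncard_union_eq hd (Set.toFinite _) (Set.toFinite _)]
    by_contra hcon
    push_neg at hcon
    have hi2 := ha i
    have hj2 := ha j
    -- one side has ≥ 2, other side nonempty
    have key : ∀ (A B : Set V), A ⊆ X i → B ⊆ X j → A ⊆ S → B ⊆ S →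
        (∀ v ∈ B, ∀ x ∈ A, ∀ y ∈ A, x ≠ y → ¬ G.Adj x y → G.Adj v x ∨ G.Adj v y) →
        2 ≤ A.ncard → B.Nonempty → False := by
      intro A B hAX hBX hAS hBS hcross hA2 ⟨v, hv⟩
      obtain ⟨x, y, hx, hy, hxy⟩ := Set.one_lt_ncard_iff (Set.toFinite A) |>.1 hA2
      have hnadj : ¬ G.Adj x y := hS (hAS hx) (hAS hy) hxy
      have hvx : v ≠ x := fun h => (hdisj (by intro hh; subst hh; omega : j ≠ i)).ne_of_mem
        (hBX hv) (hAX hx) (by rw [h])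
      have hvy : v ≠ y := fun h => (hdisj (by intro hh; subst hh; omega : j ≠ i)).ne_of_mem
        (hBX hv) (hAX hy) (by rw [h])
      rcases hcross v hv x hx y hy hxy hnadj with h | h
      · exact hS (hBS hv) (hAS hx) hvx h
      · exact hS (hBS hv) (hAS hy) hvy h
    rcases le_or_gt 2 (S ∩ X i).ncard with h2i | h2i
    · have hBne : (S ∩ X j).Nonempty := by
        rw [Set.nonempty_iff_ne_empty]
        intro h; rw [h] at hcon; simp at hcon; omega
      exact key (S ∩ X i) (S ∩ X j) Set.inter_subset_right Set.inter_subset_right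
        Set.inter_subset_left Set.inter_subset_left
        (fun v hv x hx y hy => hfwd i j hij v hv.2 x hx.2 y hy.2)
        h2i hBne
    · have h2j : 2 ≤ (S ∩ X j).ncard := by omega
      have hAne : (S ∩ X i).Nonempty := by
        rw [Set.nonempty_iff_ne_empty]
        intro h; rw [h] at hcon; simp at hcon; omega
      have key2 : ∀ (A B : Set V), A ⊆ X j → B ⊆ X i → A ⊆ S → B ⊆ S →
          (∀ v ∈ B, ∀ x ∈ A, ∀ y ∈ A, x ≠ y → ¬ G.Adj x y → G.Adj v x ∨ G.Adj v y) →
          2 ≤ A.ncard → B.Nonempty → False := by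
        intro A B hAX hBX hAS hBS hcross hA2 ⟨v, hv⟩
        obtain ⟨x, y, hx, hy, hxy⟩ := Set.one_lt_ncard_iff (Set.toFinite A) |>.1 hA2
        have hnadj : ¬ G.Adj x y := hS (hAS hx) (hAS hy) hxy
        have hvx : v ≠ x := fun h => (hdisj (by intro hh; subst hh; omega : i ≠ j)).ne_of_mem
          (hBX hv) (hAX hx) (by rw [h])
        have hvy : v ≠ y := fun h => (hdisj (by intro hh; subst hh; omega : i ≠ j)).ne_of_mem
          (hBX hv) (hAX hy) (by rw [h])
        rcases hcross v hv x hx y hy hxy hnadj with h | h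
        · exact hS (hBS hv) (hAS hx) hvx h
        · exact hS (hBS hv) (hAS hy) hvy h
      exact key2 (S ∩ X j) (S ∩ X i) Set.inter_subset_right Set.inter_subset_right
        Set.inter_subset_left Set.inter_subset_left
        (fun v hv x hx y hy => hbwd i j hij v hv.2 x hx.2 y hy.2)
        h2j hAne
  refine ⟨part1, ?_⟩
  -- Part 2
  set a : ℕ → ℕ := fun n => if h : n < k then (S ∩ X ⟨n, h⟩).ncard else 0 with ha_def
  have h1 : ∀ n, a n ≤ 2 := by
    intro n
    by_cases h : n < k
    · simpa [ha_def, h] using ha ⟨n, h⟩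
    · simp [ha_def, h]
  have h2 : ∀ n, a n + a (n+1) ≤ 2 := by
    intro n
    by_cases h' : n + 1 < k
    · have h : n < k := by omega
      have hij : ((⟨n+1, h'⟩ : Fin k) : ℕ) = ((⟨n, h⟩ : Fin k) : ℕ) + 1 := rfl
      have := part1 ⟨n, h⟩ ⟨n+1, h'⟩ hij
      have hne : (⟨n, h⟩ : Fin k) ≠ ⟨n+1, h'⟩ := by simp [Fin.ext_iff]
      have hd : Disjoint (S ∩ X ⟨n, h⟩) (S ∩ X ⟨n+1, h'⟩) :=
        (hdisj hne).mono Set.inter_subset_right Set.inter_subset_right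
      rw [Set.inter_union_distrib_left,
        Set.ncard_union_eq hd (Set.toFinite _) (Set.toFinite _)] at this
      simpa [ha_def, h, h'] using this
    · by_cases h : n < k
      · simpa [ha_def, h, h'] using h1 n
      · simp [ha_def, h, h']
  have hsum : S.ncard = ∑ n ∈ Finset.range k, a n := by
    have hScover : S = ⋃ i : Fin k, (S ∩ X i) := by
      rw [← Set.inter_iUnion, hcover, Set.inter_univ]
    rw [Set.ncard_eq_toFinset_card' S]
    have hfin : S.toFinset = Finset.univ.biUnion
        (fun i : Fin k => (S ∩ X i).toFinset) := by
      ext v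
      simp only [Set.mem_toFinset, Finset.mem_biUnion, Finset.mem_univ, true_and]
      constructor
      · intro hv
        rw [hScover] at hv
        obtain ⟨i, hi⟩ := Set.mem_iUnion.1 hv
        exact ⟨i, by simpa using hi⟩
      · rintro ⟨i, hi⟩
        exact hi.1
    rw [hfin, Finset.card_biUnion]
    · rw [← Fin.sum_univ_eq_sum_range (fun n => a n) k]
      apply Finset.sum_congr rfl
      intro i _
      simp [ha_def, i.isLt, Set.ncard_eq_toFinset_card']
    · intro i _ j _ hij
      have := (hdisj hij).mono (Set.inter_subset_right (s := S)) (Set.inter_subset_right (s := S))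
      rw [Function.onFun, Finset.disjoint_left]
      intro v hvi hvj
      simp only [Set.mem_toFinset] at hvi hvj
      exact this.ne_of_mem hvi hvj rfl
  rw [hsum]
  exact arith_sum a h1 h2 k
end

section
/- Let G be a finite simple graph on n vertices such that for every vertex v, the independence number of the neighborhood graph G[N(v)] is at least (1/4)·|N(v)|^{1/(d-3)}, where d ≥ 5. Then α(G) ≥ (1/4)·n^{1/(d-2)}. -/
lemma greedy_stable {V : Type*} [Fintype V] [DecidableEq V] (G : SimpleGraph V)
    [DecidableRel G.Adj] (D : ℕ) (hD : ∀ v, G.degree v ≤ D) :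
    ∀ s : Finset V, ∃ t : Finset V, t ⊆ s ∧
      (↑t : Set V).Pairwise (fun u v => ¬ G.Adj u v) ∧ s.card ≤ (D + 1) * t.card := by
  intro s
  induction s using Finset.strongInduction with
  | _ s ih =>
    rcases s.eq_empty_or_nonempty with rfl | ⟨v, hv⟩
    · exact ⟨∅, by simp, by simp, by simp⟩
    · set A := insert v (G.neighborFinset v) with hA
      have hsub : s \ A ⊆ s := Finset.sdiff_subset
      have hss : s \ A ⊂ s := by
        refine hsub.ssubset_of_ne ?_
        intro h
        rw [← h] at hv
        simp [hA] at hv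
      obtain ⟨t, hts, hstab, hcard⟩ := ih _ hss
      have hvt : v ∉ t := fun h => by
        have := hts h; simp [hA] at this
      refine ⟨insert v t, ?_, ?_, ?_⟩
      · exact Finset.insert_subset hv (hts.trans hsub)
      · rw [Finset.coe_insert]
        haveI : Std.Symm (fun a b => ¬ G.Adj a b) := ⟨fun a b (h : ¬ G.Adj a b) (hba : G.Adj b a) => h hba.symm⟩
        rw [Set.pairwise_insert_of_symm]
        refine ⟨hstab, fun b hb _ hadj => ?_⟩
        have := hts hb
        simp [hA] at this
        exact this.2.2 hadj
      · have h1 : s.card ≤ (s \ A).card + A.card := Finset.card_le_card_sdiff_add_card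
        have h2 : A.card ≤ D + 1 := by
          calc A.card ≤ (G.neighborFinset v).card + 1 := Finset.card_insert_le _ _
            _ = G.degree v + 1 := rfl
            _ ≤ D + 1 := Nat.add_le_add_right (hD v) 1
        rw [Finset.card_insert_of_notMem hvt]
        nlinarith

theorem stmt_12 {V : Type*} [Fintype V] [DecidableEq V] (G : SimpleGraph V)
    [DecidableRel G.Adj] (d : ℕ) (hd : 5 ≤ d) (n : ℕ) (hn : n = Fintype.card V)
    (hnbr : ∀ v : V, ∃ S : Set V, S ⊆ G.neighborSet v ∧ G.IsStableSet S ∧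
      (1 / 4 : ℝ) * (G.degree v : ℝ) ^ ((1 : ℝ) / ((d : ℝ) - 3)) ≤ (S.ncard : ℝ)) :
    ∃ S : Set V, G.IsStableSet S ∧
      (1 / 4 : ℝ) * (n : ℝ) ^ ((1 : ℝ) / ((d : ℝ) - 2)) ≤ (S.ncard : ℝ) := by
  have hd5 : (5:ℝ) ≤ (d:ℝ) := by exact_mod_cast hd
  have hd2 : (0:ℝ) < (d:ℝ) - 2 := by linarith
  have hd3 : (0:ℝ) < (d:ℝ) - 3 := by linarith
  set c : ℝ := (n:ℝ) ^ (((d:ℝ)-3)/((d:ℝ)-2)) with hc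
  by_cases hcase : ∃ v : V, c ≤ (G.degree v : ℝ)
  · obtain ⟨v, hv⟩ := hcase
    obtain ⟨S, _, hstab, hS⟩ := hnbr v
    refine ⟨S, hstab, le_trans ?_ hS⟩
    have key : (n:ℝ) ^ ((1:ℝ)/((d:ℝ)-2)) = c ^ ((1:ℝ)/((d:ℝ)-3)) := by
      rw [hc, ← Real.rpow_mul (Nat.cast_nonneg n)]
      congr 1
      field_simp
    rw [key]
    have hmono := Real.rpow_le_rpow (Real.rpow_nonneg (Nat.cast_nonneg n) _) hv
      (le_of_lt (by positivity : (0:ℝ) < 1/((d:ℝ)-3)))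
    linarith
  · push_neg at hcase
    rcases Nat.eq_zero_or_pos n with h0 | hpos
    · refine ⟨∅, by simp [SimpleGraph.IsStableSet], ?_⟩
      rw [h0]
      push_cast
      rw [Real.zero_rpow (by positivity : (1:ℝ)/((d:ℝ)-2) ≠ 0)]
      simp
    · have hnpos : (0:ℝ) < (n:ℝ) := by exact_mod_cast hpos
      have hc1 : (1:ℝ) ≤ c :=
        Real.one_le_rpow (by exact_mod_cast hpos) (le_of_lt (div_pos hd3 hd2))
      have hD : ∀ v, G.degree v ≤ ⌊c⌋₊ := fun v => Nat.le_floor (le_of_lt (hcase v))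
      obtain ⟨t, _, hstab, hcard⟩ := greedy_stable G ⌊c⌋₊ hD Finset.univ
      refine ⟨↑t, hstab, ?_⟩
      rw [Set.ncard_coe_finset]
      have hun : (Finset.univ : Finset V).card = n := by rw [hn]; exact Finset.card_univ
      have hcardR : (n:ℝ) ≤ ((⌊c⌋₊:ℝ)+1) * (t.card : ℝ) := by
        rw [← hun]; exact_mod_cast hcard
      have hDc : ((⌊c⌋₊:ℝ)) ≤ c := Nat.floor_le (by linarith)
      have htc : (0:ℝ) ≤ (t.card : ℝ) := Nat.cast_nonneg _
      have h2c : (n:ℝ) ≤ 2*c*(t.card:ℝ) := by nlinarith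
      have hkey : (n:ℝ) = c * (n:ℝ)^((1:ℝ)/((d:ℝ)-2)) := by
        rw [hc, ← Real.rpow_add hnpos]
        have e : ((d:ℝ)-3)/((d:ℝ)-2) + 1/((d:ℝ)-2) = 1 := by field_simp; ring
        rw [e, Real.rpow_one]
      have hpow : (0:ℝ) ≤ (n:ℝ)^((1:ℝ)/((d:ℝ)-2)) := Real.rpow_nonneg hnpos.le _
      nlinarith
end

section
/- Let G be a finite simple graph on n vertices such that every induced subgraph of every vertex neighborhood is 4-colorable (e.g., all neighborhood graphs are planar), so that α(G[N(v)]) ≥ |N(v)|/4 for every vertex v. Then α(G) ≥ (1/4)·n^{1/2}. -/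
lemma greedy {V : Type*} [Fintype V] [DecidableEq V] (G : SimpleGraph V)
    [DecidableRel G.Adj] (d : ℕ) (hd : ∀ v, G.degree v ≤ d) (s : Finset V) :
    ∃ S : Finset V, G.IsStableSet (↑S : Set V) ∧ s.card ≤ S.card * (d + 1) ∧
      ∀ w ∈ S, w ∈ s := by
  induction s using Finset.strongInduction with
  | _ s ih =>
    rcases s.eq_empty_or_nonempty with rfl | ⟨v, hv⟩
    · exact ⟨∅, by simp [SimpleGraph.IsStableSet], by simp, by simp⟩
    · set s' := s \ insert v (G.neighborFinset v) with hs'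
      have hss : s' ⊂ s := by
        refine Finset.ssubset_iff_of_subset (Finset.sdiff_subset) |>.mpr ⟨v, hv, ?_⟩
        simp [hs']
      obtain ⟨S', hst, hcard, hsub⟩ := ih s' hss
      refine ⟨insert v S', ?_, ?_, ?_⟩
      · intro a ha b hb hab
        simp only [Finset.coe_insert, Set.mem_insert_iff] at ha hb
        have key : ∀ w ∈ S', ¬ G.Adj v w := by
          intro w hw hadj
          have := hsub w hw
          simp [hs', SimpleGraph.mem_neighborFinset] at this
          exact this.2.2 hadj
        rcases ha with rfl | ha <;> rcases hb with rfl | hb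
        · exact absurd rfl hab
        · exact key b hb
        · exact fun h => key a ha (G.adj_symm h)
        · exact hst ha hb hab
      · have hvS : v ∉ S' := by
          intro h
          have := hsub v h
          simp [hs'] at this
        rw [Finset.card_insert_of_notMem hvS]
        have h1 : s.card ≤ s'.card + (d + 1) := by
          have : s ⊆ s' ∪ insert v (G.neighborFinset v) := by
            intro x hx
            by_cases hx' : x ∈ insert v (G.neighborFinset v)
            · exact Finset.mem_union_right _ hx'
            · exact Finset.mem_union_left _ (Finset.mem_sdiff.mpr ⟨hx, hx'⟩)
          calc s.card ≤ (s' ∪ insert v (G.neighborFinset v)).card := Finset.card_le_card this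
            _ ≤ s'.card + (insert v (G.neighborFinset v)).card := Finset.card_union_le _ _
            _ ≤ s'.card + (d + 1) := by
                have := Finset.card_insert_le v (G.neighborFinset v)
                have h2 := hd v
                rw [SimpleGraph.card_neighborFinset_eq_degree] at *
                omega
        calc s.card ≤ s'.card + (d+1) := h1
          _ ≤ S'.card * (d+1) + (d+1) := by omega
          _ = (S'.card + 1) * (d+1) := by ring
      · intro w hw
        rcases Finset.mem_insert.mp hw with rfl | hw
        · exact hv
        · exact Finset.mem_sdiff.mp (hsub w hw) |>.1

theorem stmt_14 {V : Type*} [Fintype V] [DecidableEq V] (G : SimpleGraph V)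
    [DecidableRel G.Adj] (n : ℕ) (hn : n = Fintype.card V)
    (hnbr : ∀ v : V, (G.induce (G.neighborSet v)).Colorable 4) :
    ∃ S : Set V, G.IsStableSet S ∧
      (1 / 4 : ℝ) * Real.sqrt n ≤ (S.ncard : ℝ) := by
  by_cases hcase : ∃ v : V, Real.sqrt n ≤ (G.degree v : ℝ)
  · obtain ⟨v, hv⟩ := hcase
    classical
    obtain C := (hnbr v).some
    -- pigeonhole on color classes
    have hsum : (Finset.univ : Finset (G.neighborSet v)).card =
        ∑ b : Fin 4, (Finset.univ.filter (fun x : G.neighborSet v => C x = b)).card :=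
      Finset.card_eq_sum_card_fiberwise (fun x _ => Finset.mem_univ (C x))
    obtain ⟨b, -, hb⟩ := Finset.exists_max_image (Finset.univ : Finset (Fin 4))
      (fun b => (Finset.univ.filter (fun x : G.neighborSet v => C x = b)).card)
      ⟨0, Finset.mem_univ 0⟩
    set F := Finset.univ.filter (fun x : G.neighborSet v => C x = b) with hF
    have hdegle : G.degree v ≤ 4 * F.card := by
      have h1 : (Finset.univ : Finset (G.neighborSet v)).card = G.degree v := by
        simpa using G.card_neighborSet_eq_degree v
      have h2 : ∀ c : Fin 4,
          (Finset.univ.filter (fun x : G.neighborSet v => C x = c)).card ≤ F.card :=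
        fun c => hb c (Finset.mem_univ c)
      calc G.degree v = ∑ c : Fin 4,
            (Finset.univ.filter (fun x : G.neighborSet v => C x = c)).card := by
              rw [← h1, hsum]
        _ ≤ ∑ _c : Fin 4, F.card := Finset.sum_le_sum (fun c _ => h2 c)
        _ = 4 * F.card := by simp [Finset.sum_const, Finset.card_univ]
    refine ⟨(↑(F.image (Subtype.val)) : Set V), ?_, ?_⟩
    · intro a ha c hc hne hadj
      simp only [Finset.coe_image, Set.mem_image, Finset.mem_coe, hF,
        Finset.mem_filter, Finset.mem_univ, true_and] at ha hc
      obtain ⟨x, hx, rfl⟩ := ha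
      obtain ⟨y, hy, rfl⟩ := hc
      exact C.valid (by exact hadj) (hx.trans hy.symm)
    · have hcard : ((F.image (Subtype.val) : Finset V) : Set V).ncard = F.card := by
        rw [Set.ncard_coe_finset, Finset.card_image_of_injective _ Subtype.val_injective]
      rw [hcard]
      have : (G.degree v : ℝ) ≤ 4 * F.card := by exact_mod_cast hdegle
      linarith
  · push_neg at hcase
    set d := Nat.sqrt n with hd
    have hdb : ∀ w : V, G.degree w ≤ d := by
      intro w
      rw [hd, Nat.le_sqrt]
      have h := hcase w
      have hmul : (G.degree w : ℝ) * (G.degree w : ℝ) < n := by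
        nlinarith [Real.sq_sqrt (show (0:ℝ) ≤ (n:ℝ) from Nat.cast_nonneg n),
          Real.sqrt_nonneg (n:ℝ), Nat.cast_nonneg (α := ℝ) (G.degree w)]
      exact_mod_cast hmul.le
    obtain ⟨S, hst, hcard, -⟩ := greedy G d hdb Finset.univ
    refine ⟨(↑S : Set V), hst, ?_⟩
    rw [Set.ncard_coe_finset]
    have hcardR : (n : ℝ) ≤ S.card * (d + 1) := by
      have : Fintype.card V ≤ S.card * (d+1) := by simpa using hcard
      rw [hn]; exact_mod_cast this
    have hds : (d : ℝ) ≤ Real.sqrt n := Real.nat_sqrt_le_real_sqrt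
    rcases Nat.eq_zero_or_pos n with rfl | hn1
    · simp
    · have hs1 : (1:ℝ) ≤ Real.sqrt n := by
        rw [show (1:ℝ) = Real.sqrt 1 by simp]
        exact Real.sqrt_le_sqrt (by exact_mod_cast hn1)
      have hsq : Real.sqrt n ^ 2 = (n:ℝ) := Real.sq_sqrt (Nat.cast_nonneg n)
      have hSnn : (0:ℝ) ≤ S.card := Nat.cast_nonneg _
      nlinarith [hcardR, hds, hs1, hsq, hSnn]
end
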